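/- arXiv:math/0501446 — 3 statements merged into one kernel-verified Lean document; each statement's English description precedes it below -/
import Mathlib

section
/- Let A be an m×n integer matrix and let b ∈ ℤ^m. Suppose there is a subset J ⊆ {1, …, n} with |J| = m such that the m×m submatrix A' of A consisting of the columns of A indexed by J satisfies det A' = ±1, and suppose b ∈ cone(A'). Then the polyhedron P_b = {x ∈ ℝ^n : Ax = b, x ≥ 0} has an extreme point that lies in ℤ^n. -/
/-- A point `x` of a set `S` is an extreme point (vertex) if it cannot be written as
`(y + z)/2` for two distinct points `y, z ∈ S`. -/
def IsExtremePt {E : Type*} [AddCommGroup E] [Module ℝ E] (S : Set E) (x : E) : Prop :=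
  x ∈ S ∧ ¬∃ y ∈ S, ∃ z ∈ S, y ≠ z ∧ x = (2⁻¹ : ℝ) • (y + z)

/-- if an integer matrix `A` has an `m × m` column submatrix `A'` (columns
indexed by the injective map `g`) with `det A' = ±1`, and the integer vector `b` lies in
`cone(A')`, then `P_b = {x : Ax = b, x ≥ 0}` has an extreme point with integer coordinates. -/
theorem stmt1 (m n : ℕ) (A : Matrix (Fin m) (Fin n) ℤ) (b : Fin m → ℤ)
    (g : Fin m → Fin n) (hg : Function.Injective g)
    (hdet : (A.submatrix id g).det = 1 ∨ (A.submatrix id g).det = -1)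
    (hb : ∃ c : Fin m → ℝ, (∀ j, 0 ≤ c j) ∧
      (fun i => (b i : ℝ)) = ∑ j, c j • (fun i => (A i (g j) : ℝ) : Fin m → ℝ)) :
    ∃ x : Fin n → ℝ,
      IsExtremePt
        {x : Fin n → ℝ |
          (A.map fun a => (a : ℝ)).mulVec x = (fun i => (b i : ℝ)) ∧ ∀ i, 0 ≤ x i} x ∧
      ∀ i, ∃ z : ℤ, x i = (z : ℝ) := by
  classical
  obtain ⟨c, hc0, hcs⟩ := hb
  set A' : Matrix (Fin m) (Fin m) ℤ := A.submatrix id g with hA'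
  set B : Matrix (Fin m) (Fin m) ℝ := A'.map (fun a => (a : ℝ)) with hB
  have hdetB : IsUnit B.det := by
    have h1 : B.det = ((A'.det : ℤ) : ℝ) := by
      rw [hB]; simpa using (RingHom.map_det (Int.castRingHom ℝ) A').symm
    rcases hdet with h | h <;> rw [h1, h] <;> simp
  -- injectivity of B.mulVec
  have hBinj : Function.Injective B.mulVec := by
    intro v w hvw
    have := congrArg (B⁻¹.mulVec) hvw
    rwa [Matrix.mulVec_mulVec, Matrix.mulVec_mulVec, Matrix.nonsing_inv_mul B hdetB,
      Matrix.one_mulVec, Matrix.one_mulVec] at this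
  -- c satisfies B.mulVec c = cast b
  have hBc : B.mulVec c = fun i => (b i : ℝ) := by
    funext i
    have := congrFun hcs i
    simp only [Finset.sum_apply, Pi.smul_apply, smul_eq_mul] at this
    simp only [Matrix.mulVec, dotProduct, hB, hA', Matrix.map_apply,
      Matrix.submatrix_apply, id]
    rw [this]
    exact Finset.sum_congr rfl (fun j _ => mul_comm _ _)
  -- integer solution d
  set d : Fin m → ℤ := A'.det • (A'.adjugate.mulVec b) with hd
  have hA'd : A'.mulVec d = b := by
    funext i
    have h1 : A'.mulVec (A'.adjugate.mulVec b) = A'.det • b := by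
      rw [Matrix.mulVec_mulVec, Matrix.mul_adjugate, Matrix.smul_mulVec,
        Matrix.one_mulVec]
    have h2 : A'.mulVec d = A'.det • (A'.det • b) := by
      rw [hd, Matrix.mulVec_smul, h1]
    rw [h2]
    rcases hdet with h | h <;> rw [h] <;> simp
  have hBd : B.mulVec (fun j => ((d j : ℤ) : ℝ)) = fun i => (b i : ℝ) := by
    funext i
    have := congrFun hA'd i
    simp only [Matrix.mulVec, dotProduct, hB, Matrix.map_apply] at this ⊢
    exact_mod_cast congrArg (fun z : ℤ => (z : ℝ)) this
  have hcd : c = fun j => ((d j : ℤ) : ℝ) := hBinj (by rw [hBc, hBd])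
  -- define x
  set x : Fin n → ℝ := Function.extend g c 0 with hx
  have hxg : ∀ j, x (g j) = c j := fun j => hg.extend_apply c 0 j
  have hxnr : ∀ k, (¬ ∃ j, g j = k) → x k = 0 := by
    intro k hk; rw [hx, Function.extend_apply' _ _ _ hk]; rfl
  -- key sum lemma
  have key : ∀ w : Fin n → ℝ, (∀ k, (¬ ∃ j, g j = k) → w k = 0) →
      (A.map fun a => (a : ℝ)).mulVec w = B.mulVec (w ∘ g) := by
    intro w hw
    funext i
    simp only [Matrix.mulVec, dotProduct, Matrix.map_apply, hB, hA',
      Matrix.submatrix_apply, id, Function.comp]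
    have himg : ∑ k ∈ Finset.univ.image g, (A i k : ℝ) * w k
        = ∑ j, (A i (g j) : ℝ) * w (g j) :=
      Finset.sum_image (fun a _ b _ h => hg h)
    rw [← himg]
    symm
    apply Finset.sum_subset (Finset.subset_univ _)
    intro k _ hk
    have : ¬ ∃ j, g j = k := by
      intro ⟨j, hj⟩; exact hk (Finset.mem_image.2 ⟨j, Finset.mem_univ _, hj⟩)
    rw [hw k this, mul_zero]
  have hxmem : (A.map fun a => (a : ℝ)).mulVec x = (fun i => (b i : ℝ)) ∧ ∀ i, 0 ≤ x i := by
    constructor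
    · rw [key x hxnr]
      have : x ∘ g = c := funext hxg
      rw [this, hBc]
    · intro i
      by_cases h : ∃ j, g j = i
      · obtain ⟨j, rfl⟩ := h; rw [hxg]; exact hc0 j
      · rw [hxnr i h]
  refine ⟨x, ⟨hxmem, ?_⟩, ?_⟩
  · rintro ⟨y, ⟨hy1, hy2⟩, z, ⟨hz1, hz2⟩, hyz, hxyz⟩
    -- y and z vanish off range g
    have hvan : ∀ w : Fin n → ℝ, (∀ i, 0 ≤ w i) → ∀ u : Fin n → ℝ, (∀ i, 0 ≤ u i) →
        x = (2⁻¹ : ℝ) • (w + u) → ∀ k, (¬ ∃ j, g j = k) → w k = 0 := by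
      intro w hw u hu hx' k hk
      have h0 : x k = 0 := hxnr k hk
      have := congrFun hx' k
      simp only [Pi.smul_apply, Pi.add_apply, smul_eq_mul] at this
      rw [h0] at this
      nlinarith [hw k, hu k]
    have hyv := hvan y hy2 z hz2 hxyz
    have hzv := hvan z hz2 y hy2 (by rw [hxyz]; ring_nf) -- maybe fix
    -- y ∘ g = c and z ∘ g = c
    have hyc : y ∘ g = c := by
      apply hBinj
      rw [← key y hyv, hy1, hBc]
    have hzc : z ∘ g = c := by
      apply hBinj
      rw [← key z hzv, hz1, hBc]
    apply hyz
    funext k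
    by_cases h : ∃ j, g j = k
    · obtain ⟨j, rfl⟩ := h
      have h1 : y (g j) = c j := congrFun hyc j
      have h2 : z (g j) = c j := congrFun hzc j
      rw [h1, h2]
    · rw [hyv k h, hzv k h]
  · intro i
    by_cases h : ∃ j, g j = i
    · obtain ⟨j, rfl⟩ := h
      exact ⟨d j, by rw [hxg, hcd]⟩
    · exact ⟨0, by rw [hxnr i h]; simp⟩
end

section
/- Let A be an m×n integer matrix with columns a_1, …, a_n. Suppose A has a unimodular cover, i.e., there exist subsets J_1, …, J_N ⊆ {1, …, n}, each of size m, such that for each t the m×m submatrix A_{J_t} of A with columns indexed by J_t satisfies det A_{J_t} = ±1, and cone(A) = ⋃_{t=1}^N cone(A_{J_t}). Then for every b ∈ cone(A) ∩ ℤ^m, the polyhedron P_b = {x ∈ ℝ^n : Ax = b, x ≥ 0} has an extreme point lying in ℤ^n. -/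
/-- The cone of all nonnegative real linear combinations of the columns of a matrix. -/
def coneCols {m n : ℕ} (A : Matrix (Fin m) (Fin n) ℝ) : Set (Fin m → ℝ) :=
  {y | ∃ c : Fin n → ℝ, (∀ i, 0 ≤ c i) ∧ y = ∑ i, c i • (fun j => A j i : Fin m → ℝ)}

/-- if the integer matrix `A` has a unimodular cover (the `m`-element column
subsets indexed by the injective maps `g t`, each of determinant `±1`, whose cones cover
`cone(A)`), then for every integer vector `b ∈ cone(A)` the polyhedron
`P_b = {x : Ax = b, x ≥ 0}` has an extreme point with integer coordinates. -/
theorem stmt2 (m n N : ℕ) (A : Matrix (Fin m) (Fin n) ℤ)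
    (g : Fin N → Fin m → Fin n) (hg : ∀ t, Function.Injective (g t))
    (hdet : ∀ t, (A.submatrix id (g t)).det = 1 ∨ (A.submatrix id (g t)).det = -1)
    (hcover : coneCols (A.map fun a => (a : ℝ)) =
      ⋃ t, coneCols ((A.map fun a => (a : ℝ)).submatrix id (g t)))
    (b : Fin m → ℤ) (hb : (fun i => (b i : ℝ)) ∈ coneCols (A.map fun a => (a : ℝ))) :
    ∃ x : Fin n → ℝ,
      IsExtremePt
        {x : Fin n → ℝ |
          (A.map fun a => (a : ℝ)).mulVec x = (fun i => (b i : ℝ)) ∧ ∀ i, 0 ≤ x i} x ∧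
      ∀ i, ∃ z : ℤ, x i = (z : ℝ) := by
  classical
  rw [hcover, Set.mem_iUnion] at hb
  obtain ⟨t, c, hc0, hbc⟩ := hb
  set AR : Matrix (Fin m) (Fin n) ℝ := A.map fun a => (a : ℝ) with hAR
  set B : Matrix (Fin m) (Fin m) ℤ := A.submatrix id (g t) with hB
  set BR : Matrix (Fin m) (Fin m) ℝ := AR.submatrix id (g t) with hBR
  have hBRB : BR = B.map fun a => (a : ℝ) := by ext j k; rfl
  -- integer inverse of B
  set C : Matrix (Fin m) (Fin m) ℤ := B.det • B.adjugate with hC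
  have hdet2 : B.det * B.det = 1 := by rcases hdet t with h | h <;> rw [h] <;> ring
  have hCB : C * B = 1 := by
    rw [hC, Matrix.smul_mul, Matrix.adjugate_mul, smul_smul, hdet2, one_smul]
  set CR : Matrix (Fin m) (Fin m) ℝ := C.map fun a => (a : ℝ) with hCR
  have hCRBR : CR * BR = 1 := by
    have h1 : CR * BR = (C * B).map (Int.castRingHom ℝ) :=
      (Matrix.map_mul (f := Int.castRingHom ℝ)).symm
    rw [h1, hCB]
    ext j k; simp [Matrix.map_apply, Matrix.one_apply]
  -- b = BR.mulVec c
  have hbc' : (fun i => (b i : ℝ)) = BR.mulVec c := by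
    rw [hbc]; funext j
    simp only [Matrix.mulVec, dotProduct, Finset.sum_apply, Pi.smul_apply,
      smul_eq_mul]
    exact Finset.sum_congr rfl fun k _ => mul_comm _ _
  -- injectivity of BR.mulVec
  have hinj : Function.Injective BR.mulVec := by
    intro u v huv
    have h2 := congrArg CR.mulVec huv
    rwa [Matrix.mulVec_mulVec, Matrix.mulVec_mulVec, hCRBR, Matrix.one_mulVec,
      Matrix.one_mulVec] at h2
  -- c is integral
  have hcint : ∀ k, c k = ((C.mulVec b) k : ℝ) := by
    intro k
    have : CR.mulVec (BR.mulVec c) = c := by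
      rw [Matrix.mulVec_mulVec, hCRBR, Matrix.one_mulVec]
    have hck : c k = ∑ j, ((C k j : ℝ)) * ((b j : ℝ)) := by
      conv_lhs => rw [← this, ← hbc']
      simp [Matrix.mulVec, dotProduct, hCR, Matrix.map_apply]
    rw [hck]
    push_cast [Matrix.mulVec, dotProduct]
    rfl
  -- the candidate point
  set x : Fin n → ℝ := Function.extend (g t) c 0 with hx
  have hxg : ∀ k, x (g t k) = c k := fun k => (hg t).extend_apply c 0 k
  have hx0 : ∀ i, (¬∃ k, g t k = i) → x i = 0 := by
    intro i hi
    rw [hx, Function.extend_apply' _ _ _ hi]; rfl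
  -- key reduction lemma
  have key : ∀ w : Fin n → ℝ, (∀ i, (¬∃ k, g t k = i) → w i = 0) →
      AR.mulVec w = BR.mulVec fun k => w (g t k) := by
    intro w hw
    funext j
    show ∑ i, AR j i * w i = ∑ k, BR j k * w (g t k)
    have h1 : ∑ i, AR j i * w i = ∑ i ∈ Finset.univ.image (g t), AR j i * w i := by
      refine (Finset.sum_subset (Finset.subset_univ _) fun i _ hi => ?_).symm
      rw [hw i, mul_zero]
      simpa using hi
    rw [h1, Finset.sum_image fun a _ b _ h => hg t h]
    rfl
  refine ⟨x, ⟨⟨?_, ?_⟩, ?_⟩, ?_⟩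
  · -- Ax = b
    show AR.mulVec x = _
    rw [key x hx0, hbc']
    exact congrArg _ (funext hxg)
  · -- x ≥ 0
    intro i
    by_cases hi : ∃ k, g t k = i
    · obtain ⟨k, rfl⟩ := hi; rw [hxg]; exact hc0 k
    · rw [hx0 i hi]
  · -- extremality
    rintro ⟨y, ⟨hy1, hy2⟩, z, ⟨hz1, hz2⟩, hyz, hmid⟩
    have hzero : ∀ i, (¬∃ k, g t k = i) → y i = 0 ∧ z i = 0 := by
      intro i hi
      have h0 : x i = 0 := hx0 i hi
      have := congrFun hmid i
      simp only [Pi.smul_apply, Pi.add_apply, smul_eq_mul] at this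
      constructor <;> nlinarith [hy2 i, hz2 i, this ▸ h0]
    have hy0 : ∀ i, (¬∃ k, g t k = i) → y i = 0 := fun i hi => (hzero i hi).1
    have hz0 : ∀ i, (¬∃ k, g t k = i) → z i = 0 := fun i hi => (hzero i hi).2
    have hyB : BR.mulVec (fun k => y (g t k)) = BR.mulVec (fun k => z (g t k)) := by
      rw [← key y hy0, ← key z hz0, hy1, hz1]
    have hgt := hinj hyB
    apply hyz
    funext i
    by_cases hi : ∃ k, g t k = i
    · obtain ⟨k, rfl⟩ := hi; exact congrFun hgt k
    · rw [hy0 i hi, hz0 i hi]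
  · -- integrality
    intro i
    by_cases hi : ∃ k, g t k = i
    · obtain ⟨k, rfl⟩ := hi
      exact ⟨C.mulVec b k, by rw [hxg, hcint]⟩
    · exact ⟨0, by rw [hx0 i hi]; simp⟩
end

section
/- Let r ≥ 1, let λ and μ be partitions with r parts, and define partitions τ and σ with r parts by τ_i = μ_i + μ_{i+1} + ⋯ + μ_r and σ_i = μ_{i+1} + μ_{i+2} + ⋯ + μ_r for i = 1, …, r. Then the number of semistandard Young tableaux of shape λ and content μ with entries in {1, …, r} equals the number of Littlewood–Richardson skew tableaux of shape τ/σ and content λ. In particular, the Kostka number K_{λμ} equals the Littlewood–Richardson coefficient c_{σλ}^{τ} counted by such tableaux, so computing Kostka numbers reduces to computing Littlewood–Richardson coefficients. -/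
/-- A partition with `r` parts, encoded as a weakly decreasing function `ℕ → ℕ` that
vanishes from index `r` on (0-indexed: `v i` is the part `v_{i+1}`). -/
def IsPartitionWith (r : ℕ) (v : ℕ → ℕ) : Prop :=
  (∀ i j, i ≤ j → v j ≤ v i) ∧ ∀ i, r ≤ i → v i = 0

/-- The cells of the skew diagram `τ/σ` (0-indexed): pairs `(i, j)` with `i < r` and
`σ i ≤ j < τ i`.  (For a straight shape take `σ = 0`.) -/
def shapeCells (r : ℕ) (σ τ : ℕ → ℕ) : Finset (ℕ × ℕ) :=
  (Finset.range r ×ˢ Finset.range (τ 0)).filter fun c => σ c.1 ≤ c.2 ∧ c.2 < τ c.1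

/-- A semistandard (skew) tableau of shape `τ/σ`: a filling of the cells of `τ/σ` by
positive integers (and `0` outside the shape) weakly increasing along rows and strictly
increasing down columns. -/
def IsSkewSSYT (r : ℕ) (σ τ : ℕ → ℕ) (f : ℕ × ℕ → ℕ) : Prop :=
  (∀ c, c ∉ shapeCells r σ τ → f c = 0) ∧
  (∀ c ∈ shapeCells r σ τ, 1 ≤ f c) ∧
  (∀ i j j', (i, j) ∈ shapeCells r σ τ → (i, j') ∈ shapeCells r σ τ → j ≤ j' →
    f (i, j) ≤ f (i, j')) ∧
  (∀ i i' j, (i, j) ∈ shapeCells r σ τ → (i', j) ∈ shapeCells r σ τ → i < i' →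
    f (i, j) < f (i', j))

/-- The filling `f` has content `c`: for every `k`, the number of entries equal to `k + 1`
is `c k` (0-indexed: `c k` is the multiplicity of the letter `k + 1`). -/
def HasContent (r : ℕ) (σ τ : ℕ → ℕ) (f : ℕ × ℕ → ℕ) (c : ℕ → ℕ) : Prop :=
  ∀ k : ℕ, ((shapeCells r σ τ).filter fun p => f p = k + 1).card = c k

/-- The number of entries equal to `k` in the prefix of the reverse reading word ending at
cell `(i, j)`: cells in rows above row `i`, together with the cells of row `i` in columns
`≥ j` (rows are read right to left, top to bottom). -/
def prefixCount (r : ℕ) (σ τ : ℕ → ℕ) (f : ℕ × ℕ → ℕ) (i j k : ℕ) : ℕ :=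
  ((shapeCells r σ τ).filter fun c => (c.1 < i ∨ (c.1 = i ∧ j ≤ c.2)) ∧ f c = k).card

/-- The reverse reading word of `f` is a lattice word: in every prefix, each letter `k + 1`
occurs at least as often as `k + 2`. -/
def IsLatticeWord (r : ℕ) (σ τ : ℕ → ℕ) (f : ℕ × ℕ → ℕ) : Prop :=
  ∀ c ∈ shapeCells r σ τ, ∀ k : ℕ,
    prefixCount r σ τ f c.1 c.2 (k + 2) ≤ prefixCount r σ τ f c.1 c.2 (k + 1)

namespace Stmt11
open Finset

/-- counts of letter `k+1` in row `i` -/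
def cnt (sig tau : ℕ → ℕ) (f : ℕ × ℕ → ℕ) (i k : ℕ) : ℕ :=
  ((Finset.Ico (sig i) (tau i)).filter fun j => f (i, j) = k + 1).card

/-- counts of letters `≤ v` in row `i` -/
def Acnt (sig tau : ℕ → ℕ) (f : ℕ × ℕ → ℕ) (i v : ℕ) : ℕ :=
  ((Finset.Ico (sig i) (tau i)).filter fun j => f (i, j) ≤ v).card

def psum (m : ℕ → ℕ → ℕ) (i v : ℕ) : ℕ := ∑ t ∈ Finset.range v, m i t

lemma psum_mono (m : ℕ → ℕ → ℕ) (i : ℕ) {v w : ℕ} (h : v ≤ w) :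
    psum m i v ≤ psum m i w :=
  Finset.sum_le_sum_of_subset (Finset.range_subset_range.mpr h)

lemma psum_succ (m : ℕ → ℕ → ℕ) (i v : ℕ) : psum m i (v + 1) = psum m i v + m i v :=
  Finset.sum_range_succ _ _

lemma downclosed_eq_Ico {a b : ℕ} {s : Finset ℕ} (hs : s ⊆ Finset.Ico a b)
    (hdc : ∀ j ∈ s, ∀ j', a ≤ j' → j' ≤ j → j' ∈ s) :
    s = Finset.Ico a (a + s.card) := by
  have hsub : s ⊆ Finset.Ico a (a + s.card) := by
    intro j hj
    have haj : a ≤ j := (Finset.mem_Ico.mp (hs hj)).1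
    have h1 : Finset.Ico a (j + 1) ⊆ s := fun j' hj' => by
      obtain ⟨h1, h2⟩ := Finset.mem_Ico.mp hj'
      exact hdc j hj j' h1 (Nat.lt_succ_iff.mp h2)
    have := Finset.card_le_card h1
    rw [Nat.card_Ico] at this
    exact Finset.mem_Ico.mpr ⟨haj, by omega⟩
  exact Finset.eq_of_subset_of_card_le hsub (by rw [Nat.card_Ico]; omega)

lemma mem_shapeCells {r : ℕ} {sig tau : ℕ → ℕ} (h0 : ∀ i, i < r → tau i ≤ tau 0)
    {i j : ℕ} : (i, j) ∈ shapeCells r sig tau ↔ i < r ∧ sig i ≤ j ∧ j < tau i := by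
  simp only [shapeCells, Finset.mem_filter, Finset.mem_product, Finset.mem_range]
  constructor
  · rintro ⟨⟨h1, h2⟩, h3, h4⟩; exact ⟨h1, h3, h4⟩
  · rintro ⟨h1, h3, h4⟩; exact ⟨⟨h1, lt_of_lt_of_le h4 (h0 i h1)⟩, h3, h4⟩

lemma card_filter_shape {r : ℕ} {sig tau : ℕ → ℕ} (h0 : ∀ i, i < r → tau i ≤ tau 0)
    (P : ℕ × ℕ → Prop) [DecidablePred P] :
    ((shapeCells r sig tau).filter P).card =
      ∑ i ∈ Finset.range r, ((Finset.Ico (sig i) (tau i)).filter fun j => P (i, j)).card := by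
  have hEq : (shapeCells r sig tau).filter P =
      (Finset.range r).biUnion (fun i =>
        ((Finset.Ico (sig i) (tau i)).filter fun j => P (i, j)).image (fun j => (i, j))) := by
    ext ⟨i, j⟩
    simp only [Finset.mem_filter, Finset.mem_biUnion, Finset.mem_range, Finset.mem_image,
      mem_shapeCells h0, Finset.mem_Ico, Prod.mk.injEq]
    constructor
    · rintro ⟨⟨h1, h2, h3⟩, h4⟩; exact ⟨i, h1, j, ⟨⟨h2, h3⟩, h4⟩, rfl, rfl⟩
    · rintro ⟨i', h1, j', ⟨⟨h2, h3⟩, h4⟩, rfl, rfl⟩; exact ⟨⟨h1, h2, h3⟩, h4⟩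
  rw [hEq, Finset.card_biUnion]
  · exact Finset.sum_congr rfl fun i _ =>
      Finset.card_image_of_injective _ (fun a b h => by simpa using h)
  · intro x _ y _ hxy
    simp only [Finset.disjoint_left, Finset.mem_image]
    rintro ⟨a, b⟩ ⟨j, _, h⟩ ⟨j', _, h'⟩
    apply hxy
    have e1 := congrArg Prod.fst h
    have e2 := congrArg Prod.fst h'
    simp at e1 e2
    omega

lemma hasContent_iff {r : ℕ} {sig tau : ℕ → ℕ} (h0 : ∀ i, i < r → tau i ≤ tau 0)
    (f : ℕ × ℕ → ℕ) (c : ℕ → ℕ) :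
    HasContent r sig tau f c ↔
      ∀ k, ∑ i ∈ Finset.range r, cnt sig tau f i k = c k := by
  unfold HasContent
  constructor
  · intro h k
    rw [← h k, card_filter_shape h0]
    rfl
  · intro h k
    rw [card_filter_shape h0]
    exact h k

section Row
variable {sig tau : ℕ → ℕ} {f : ℕ × ℕ → ℕ} {i : ℕ}
  (hmono : ∀ j j', sig i ≤ j → j ≤ j' → j' < tau i → f (i, j) ≤ f (i, j'))

include hmono in
lemma filter_le_eq (v : ℕ) :
    (Finset.Ico (sig i) (tau i)).filter (fun j => f (i, j) ≤ v) =
      Finset.Ico (sig i) (sig i + Acnt sig tau f i v) := by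
  apply downclosed_eq_Ico (Finset.filter_subset _ _)
  intro j hj j' h1 h2
  rw [Finset.mem_filter, Finset.mem_Ico] at hj ⊢
  exact ⟨⟨h1, lt_of_le_of_lt h2 hj.1.2⟩,
    le_trans (hmono j' j h1 h2 hj.1.2) hj.2⟩

include hmono in
lemma le_iff_lt_Acnt {j v : ℕ} (hj1 : sig i ≤ j) (hj2 : j < tau i) :
    f (i, j) ≤ v ↔ j < sig i + Acnt sig tau f i v := by
  constructor
  · intro h
    have : j ∈ (Finset.Ico (sig i) (tau i)).filter (fun j => f (i, j) ≤ v) :=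
      Finset.mem_filter.mpr ⟨Finset.mem_Ico.mpr ⟨hj1, hj2⟩, h⟩
    rw [filter_le_eq hmono] at this
    exact (Finset.mem_Ico.mp this).2
  · intro h
    have : j ∈ Finset.Ico (sig i) (sig i + Acnt sig tau f i v) := Finset.mem_Ico.mpr ⟨hj1, h⟩
    rw [← filter_le_eq hmono] at this
    exact (Finset.mem_filter.mp this).2

lemma Acnt_zero (hpos : ∀ j, sig i ≤ j → j < tau i → 1 ≤ f (i, j)) :
    Acnt sig tau f i 0 = 0 := by
  rw [Acnt, Finset.card_eq_zero, Finset.filter_eq_empty_iff]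
  intro j hj
  rw [Finset.mem_Ico] at hj
  have := hpos j hj.1 hj.2
  omega

lemma Acnt_succ (v : ℕ) :
    Acnt sig tau f i (v + 1) = Acnt sig tau f i v + cnt sig tau f i v := by
  rw [Acnt, Acnt, cnt]
  rw [show (Finset.Ico (sig i) (tau i)).filter (fun j => f (i, j) ≤ v + 1) =
      ((Finset.Ico (sig i) (tau i)).filter fun j => f (i, j) ≤ v) ∪
      ((Finset.Ico (sig i) (tau i)).filter fun j => f (i, j) = v + 1) from ?_]
  · rw [Finset.card_union_of_disjoint]
    rw [Finset.disjoint_filter]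
    intro j _ h1 h2
    omega
  · rw [← Finset.filter_or]
    apply Finset.filter_congr
    intro j _
    constructor
    · intro h; omega
    · intro h; omega

lemma Acnt_eq_psum (hpos : ∀ j, sig i ≤ j → j < tau i → 1 ≤ f (i, j)) (v : ℕ) :
    Acnt sig tau f i v = psum (cnt sig tau f) i v := by
  induction v with
  | zero => rw [Acnt_zero hpos]; rfl
  | succ v ih => rw [Acnt_succ, psum_succ, ih]

lemma Acnt_top {v : ℕ} (hle : ∀ j, sig i ≤ j → j < tau i → f (i, j) ≤ v) :
    Acnt sig tau f i v = tau i - sig i := by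
  rw [Acnt, Finset.filter_true_of_mem, Nat.card_Ico]
  intro j hj
  rw [Finset.mem_Ico] at hj
  exact hle j hj.1 hj.2

lemma Acnt_le (v : ℕ) : Acnt sig tau f i v ≤ tau i - sig i := by
  rw [← Nat.card_Ico (sig i) (tau i)]
  exact Finset.card_le_card (Finset.filter_subset _ _)

include hmono in
lemma value_iff (hpos : ∀ j, sig i ≤ j → j < tau i → 1 ≤ f (i, j))
    {j v : ℕ} (hj1 : sig i ≤ j) (hj2 : j < tau i) :
    f (i, j) = v + 1 ↔
      sig i + psum (cnt sig tau f) i v ≤ j ∧ j < sig i + psum (cnt sig tau f) i (v + 1) := by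
  rw [← Acnt_eq_psum hpos, ← Acnt_eq_psum hpos]
  rw [show (f (i, j) = v + 1) ↔ (f (i, j) ≤ v + 1 ∧ ¬f (i, j) ≤ v) by omega]
  rw [le_iff_lt_Acnt hmono hj1 hj2, le_iff_lt_Acnt hmono hj1 hj2]
  omega

include hmono in
lemma filter_eq_eq (hst : sig i ≤ tau i) (v : ℕ) :
    (Finset.Ico (sig i) (tau i)).filter (fun j => f (i, j) = v + 1) =
      Finset.Ico (sig i + Acnt sig tau f i v) (sig i + Acnt sig tau f i (v + 1)) := by
  ext j
  rw [Finset.mem_filter, Finset.mem_Ico, Finset.mem_Ico]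
  constructor
  · rintro ⟨⟨h1, h2⟩, h3⟩
    have hv1 : f (i, j) ≤ v + 1 := by omega
    have hv0 : ¬f (i, j) ≤ v := by omega
    rw [le_iff_lt_Acnt hmono h1 h2] at hv1 hv0
    omega
  · rintro ⟨h1, h2⟩
    have hj1 : sig i ≤ j := by omega
    have hj2 : j < tau i := by
      have := Acnt_le (sig := sig) (tau := tau) (f := f) (i := i) (v + 1)
      omega
    have hv1 : f (i, j) ≤ v + 1 := (le_iff_lt_Acnt hmono hj1 hj2).mpr h2
    have hv0 : ¬f (i, j) ≤ v := by
      rw [le_iff_lt_Acnt hmono hj1 hj2]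
      omega
    exact ⟨⟨hj1, hj2⟩, by omega⟩

end Row

def fill (r : ℕ) (sig tau : ℕ → ℕ) (m : ℕ → ℕ → ℕ) : ℕ × ℕ → ℕ := fun c =>
  if c.1 < r ∧ sig c.1 ≤ c.2 ∧ c.2 < tau c.1 then
    1 + ((Finset.range r).filter fun t => sig c.1 + psum m c.1 (t + 1) ≤ c.2).card
  else 0

section Fill
variable {r : ℕ} {sig tau : ℕ → ℕ} {m : ℕ → ℕ → ℕ} {i j : ℕ}

lemma fill_eq_iff (hi : i < r) (hj1 : sig i ≤ j) (hj2 : j < tau i)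
    (hlen : sig i + psum m i r = tau i) (v : ℕ) :
    fill r sig tau m (i, j) = v + 1 ↔
      sig i + psum m i v ≤ j ∧ j < sig i + psum m i (v + 1) := by
  set F := (Finset.range r).filter fun t => sig i + psum m i (t + 1) ≤ j with hF
  have hFr : F = Finset.range F.card := by
    have h := downclosed_eq_Ico (a := 0) (b := r)
      (s := F) (by intro t ht; rw [Finset.mem_Ico]; simp only [hF, Finset.mem_filter,
        Finset.mem_range] at ht; omega)
      (by intro t ht t' _ h2
          simp only [hF, Finset.mem_filter, Finset.mem_range] at ht ⊢
          exact ⟨lt_of_le_of_lt h2 ht.1, le_trans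
            (Nat.add_le_add_left (psum_mono m i (by omega)) _) ht.2⟩)
    rw [Finset.range_eq_Ico]; simpa using h
  have hfill : fill r sig tau m (i, j) = 1 + F.card := by
    rw [fill, if_pos ⟨hi, hj1, hj2⟩]
  have hK1 : sig i + psum m i F.card ≤ j := by
    rcases Nat.eq_zero_or_pos F.card with h | h
    · rw [h]; simpa [psum] using hj1
    · have : F.card - 1 ∈ F := by
        rw [hFr, Finset.mem_range, Finset.card_range]; omega
      simp only [hF, Finset.mem_filter, Finset.mem_range] at this
      have := this.2
      rwa [show F.card - 1 + 1 = F.card by omega] at this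
  have hVr : F.card < r := by
    by_contra h
    push_neg at h
    have hr1 : 1 ≤ r := by omega
    have : r - 1 ∈ F := by rw [hFr]; simp; omega
    simp only [hF, Finset.mem_filter, Finset.mem_range] at this
    have := this.2
    rw [show r - 1 + 1 = r by omega, hlen] at this
    omega
  have hK2 : j < sig i + psum m i (F.card + 1) := by
    have : F.card ∉ F := by rw [hFr]; simp
    simp only [hF, Finset.mem_filter, Finset.mem_range] at this
    push_neg at this
    exact this hVr
  rw [hfill]
  constructor
  · intro h
    have : v = F.card := by omega
    rw [this]; exact ⟨hK1, hK2⟩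
  · rintro ⟨h1, h2⟩
    have : v = F.card := by
      by_contra hne
      rcases Nat.lt_or_ge v F.card with h | h
      · have := psum_mono m i (show v + 1 ≤ F.card by omega)
        omega
      · have := psum_mono m i (show F.card + 1 ≤ v by omega)
        omega
    omega

lemma fill_le_r (hlen : ∀ i, i < r → sig i + psum m i r = tau i) (c : ℕ × ℕ) :
    fill r sig tau m c ≤ r := by
  obtain ⟨i, j⟩ := c
  by_cases h : i < r ∧ sig i ≤ j ∧ j < tau i
  · obtain ⟨v, hv⟩ : ∃ v, fill r sig tau m (i, j) = v + 1 := by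
      rw [fill, if_pos h]; exact ⟨_, Nat.add_comm 1 _⟩
    rw [hv]
    rw [fill_eq_iff h.1 h.2.1 h.2.2 (hlen i h.1) v] at hv
    by_contra hc
    push_neg at hc
    have : r ≤ v := by omega
    have h1 := psum_mono m i (show r ≤ v by omega)
    have h2 := psum_mono m i (show v ≤ v + 1 by omega)
    have := hlen i h.1
    omega
  · rw [fill, if_neg h]; omega

lemma fill_pos (h : i < r ∧ sig i ≤ j ∧ j < tau i) : 1 ≤ fill r sig tau m (i, j) := by
  rw [fill, if_pos h]; omega

lemma fill_zero (h : ¬(i < r ∧ sig i ≤ j ∧ j < tau i)) : fill r sig tau m (i, j) = 0 := by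
  rw [fill, if_neg h]

lemma fill_row_mono {j' : ℕ} (hi : i < r) (hj1 : sig i ≤ j) (hjj : j ≤ j') (hj2 : j' < tau i) :
    fill r sig tau m (i, j) ≤ fill r sig tau m (i, j') := by
  have e1 : fill r sig tau m (i, j) =
      1 + ((Finset.range r).filter fun t => sig i + psum m i (t + 1) ≤ j).card := by
    rw [fill, if_pos ⟨hi, hj1, lt_of_le_of_lt hjj hj2⟩]
  have e2 : fill r sig tau m (i, j') =
      1 + ((Finset.range r).filter fun t => sig i + psum m i (t + 1) ≤ j').card := by
    rw [fill, if_pos ⟨hi, le_trans hj1 hjj, hj2⟩]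
  rw [e1, e2]
  have hsub : ((Finset.range r).filter fun t => sig i + psum m i (t + 1) ≤ j) ⊆
      ((Finset.range r).filter fun t => sig i + psum m i (t + 1) ≤ j') := by
    intro t ht
    rw [Finset.mem_filter] at ht ⊢
    exact ⟨ht.1, le_trans ht.2 hjj⟩
  have := Finset.card_le_card hsub
  omega

lemma cnt_fill (hi : i < r) {k : ℕ} (hk : k < r)
    (hlen : sig i + psum m i r = tau i) :
    ((Finset.Ico (sig i) (tau i)).filter fun j => fill r sig tau m (i, j) = k + 1).card
      = m i k := by
  have hEq : (Finset.Ico (sig i) (tau i)).filter (fun j => fill r sig tau m (i, j) = k + 1) =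
      Finset.Ico (sig i + psum m i k) (sig i + psum m i (k + 1)) := by
    ext j
    rw [Finset.mem_filter, Finset.mem_Ico, Finset.mem_Ico]
    constructor
    · rintro ⟨⟨h1, h2⟩, h3⟩
      exact (fill_eq_iff hi h1 h2 hlen k).mp h3
    · rintro ⟨h1, h2⟩
      have hj1 : sig i ≤ j := le_trans (by omega) h1
      have hj2 : j < tau i := by
        have := psum_mono m i (show k + 1 ≤ r by omega)
        omega
      exact ⟨⟨hj1, hj2⟩, (fill_eq_iff hi hj1 hj2 hlen k).mpr ⟨h1, h2⟩⟩
  rw [hEq, Nat.card_Ico, psum_succ]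
  omega

lemma fill_cnt {f : ℕ × ℕ → ℕ} (hst : ∀ i, i < r → sig i ≤ tau i)
    (hmono : ∀ i j j', i < r → sig i ≤ j → j ≤ j' → j' < tau i → f (i, j) ≤ f (i, j'))
    (hpos : ∀ i j, i < r → sig i ≤ j → j < tau i → 1 ≤ f (i, j))
    (hler : ∀ i j, i < r → sig i ≤ j → j < tau i → f (i, j) ≤ r)
    (hz : ∀ i j, ¬(i < r ∧ sig i ≤ j ∧ j < tau i) → f (i, j) = 0) :
    fill r sig tau (cnt sig tau f) = f := by
  funext c
  obtain ⟨i, j⟩ := c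
  by_cases h : i < r ∧ sig i ≤ j ∧ j < tau i
  · obtain ⟨hi, hj1, hj2⟩ := h
    have hmr : ∀ j j', sig i ≤ j → j ≤ j' → j' < tau i → f (i, j) ≤ f (i, j') :=
      fun a b c d e => hmono i a b hi c d e
    have hpr : ∀ j, sig i ≤ j → j < tau i → 1 ≤ f (i, j) := fun a b c => hpos i a hi b c
    have hlen : sig i + psum (cnt sig tau f) i r = tau i := by
      rw [← Acnt_eq_psum hpr, Acnt_top (fun a b c => hler i a hi b c)]
      have := hst i hi
      omega
    obtain ⟨v, hv⟩ : ∃ v, f (i, j) = v + 1 := by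
      have := hpos i j hi hj1 hj2
      exact ⟨f (i, j) - 1, by omega⟩
    rw [hv]
    rw [value_iff hmr hpr hj1 hj2] at hv
    exact (fill_eq_iff hi hj1 hj2 hlen v).mpr hv
  · rw [fill_zero h, hz i j h]

end Fill

section Lattice
variable {r : ℕ} {sig tau : ℕ → ℕ} {f : ℕ × ℕ → ℕ}

lemma prefixCount_eq (h0 : ∀ i, i < r → tau i ≤ tau 0) {i : ℕ} (hi : i < r) (j w : ℕ) :
    prefixCount r sig tau f i j w =
      (∑ i' ∈ Finset.range i,
        ((Finset.Ico (sig i') (tau i')).filter fun j' => f (i', j') = w).card) +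
      ((Finset.Ico (sig i) (tau i)).filter fun j' => j ≤ j' ∧ f (i, j') = w).card := by
  rw [prefixCount, card_filter_shape h0]
  rw [Finset.range_eq_Ico, ← Finset.sum_Ico_consecutive _ (Nat.zero_le i) (le_of_lt hi)]
  congr 1
  · rw [← Finset.range_eq_Ico]
    apply Finset.sum_congr rfl
    intro i' hi'
    rw [Finset.mem_range] at hi'
    congr 1
    apply Finset.filter_congr
    intro j' _
    have : i' < i := hi'
    tauto
  · rw [Finset.sum_eq_single_of_mem i (Finset.mem_Ico.mpr ⟨le_refl i, hi⟩)]
    · congr 1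
      apply Finset.filter_congr
      intro j' _
      have : ¬i < i := lt_irrefl i
      tauto
    · intro i' hi' hne
      rw [Finset.mem_Ico] at hi'
      rw [Finset.card_eq_zero, Finset.filter_eq_empty_iff]
      rintro j' _ ⟨h1 | ⟨h1, _⟩, _⟩
      · omega
      · omega

variable (hmono : ∀ i j j', i < r → sig i ≤ j → j ≤ j' → j' < tau i → f (i, j) ≤ f (i, j'))
  (hpos : ∀ i j, i < r → sig i ≤ j → j < tau i → 1 ≤ f (i, j))

include hmono hpos in
lemma lattice_of_cnt (h0 : ∀ i, i < r → tau i ≤ tau 0)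
    (H : ∀ i, i < r → ∀ k, ∑ t ∈ Finset.range (i + 1), cnt sig tau f t (k + 1) ≤
      ∑ t ∈ Finset.range i, cnt sig tau f t k) :
    IsLatticeWord r sig tau f := by
  rintro ⟨i, j⟩ hc k
  rw [mem_shapeCells h0] at hc
  obtain ⟨hi, hj1, hj2⟩ := hc
  show prefixCount r sig tau f i j (k + 2) ≤ prefixCount r sig tau f i j (k + 1)
  rw [prefixCount_eq h0 hi, prefixCount_eq h0 hi]
  have h1 : ((Finset.Ico (sig i) (tau i)).filter fun j' => j ≤ j' ∧ f (i, j') = k + 2).card ≤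
      cnt sig tau f i (k + 1) := by
    apply Finset.card_le_card
    intro j' hj'
    rw [Finset.mem_filter] at hj' ⊢
    exact ⟨hj'.1, hj'.2.2⟩
  have h2 := H i hi k
  rw [Finset.sum_range_succ] at h2
  have : (∑ i' ∈ Finset.range i,
      ((Finset.Ico (sig i') (tau i')).filter fun j' => f (i', j') = k + 2).card) =
      ∑ t ∈ Finset.range i, cnt sig tau f t (k + 1) := rfl
  rw [this]
  have : (∑ i' ∈ Finset.range i,
      ((Finset.Ico (sig i') (tau i')).filter fun j' => f (i', j') = k + 1).card) =
      ∑ t ∈ Finset.range i, cnt sig tau f t k := rfl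
  rw [this]
  omega

include hmono hpos in
lemma cnt_of_lattice (h0 : ∀ i, i < r → tau i ≤ tau 0) (hst : ∀ i, i < r → sig i ≤ tau i)
    (hlat : IsLatticeWord r sig tau f) :
    ∀ i, i < r → ∀ k, ∑ t ∈ Finset.range (i + 1), cnt sig tau f t (k + 1) ≤
      ∑ t ∈ Finset.range i, cnt sig tau f t k := by
  have step : ∀ i, i < r → ∀ k, cnt sig tau f i (k + 1) ≠ 0 →
      ∑ t ∈ Finset.range (i + 1), cnt sig tau f t (k + 1) ≤
        ∑ t ∈ Finset.range i, cnt sig tau f t k := by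
    intro i hi k hk
    have hmr : ∀ j j', sig i ≤ j → j ≤ j' → j' < tau i → f (i, j) ≤ f (i, j') :=
      fun a b c d e => hmono i a b hi c d e
    set j0 := sig i + Acnt sig tau f i (k + 1) with hj0
    have hfe2 : (Finset.Ico (sig i) (tau i)).filter (fun j => f (i, j) = k + 2) =
        Finset.Ico j0 (sig i + Acnt sig tau f i (k + 2)) :=
      filter_eq_eq hmr (hst i hi) (k + 1)
    have hcnt2 : cnt sig tau f i (k + 1) =
        (sig i + Acnt sig tau f i (k + 2)) - j0 := by
      rw [cnt, hfe2, Nat.card_Ico]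
    have hlt : j0 < sig i + Acnt sig tau f i (k + 2) := by
      rcases Nat.lt_or_ge j0 (sig i + Acnt sig tau f i (k + 2)) with h | h
      · exact h
      · exfalso; apply hk; omega
    have hj2 : j0 < tau i := by
      have := Acnt_le (sig := sig) (tau := tau) (f := f) (i := i) (k + 2)
      have := hst i hi
      omega
    have hcell : (i, j0) ∈ shapeCells r sig tau :=
      (mem_shapeCells h0).mpr ⟨hi, by omega, hj2⟩
    have hlatc : prefixCount r sig tau f i j0 (k + 2) ≤ prefixCount r sig tau f i j0 (k + 1) :=
      hlat (i, j0) hcell k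
    rw [prefixCount_eq h0 hi, prefixCount_eq h0 hi] at hlatc
    have hT1 : ((Finset.Ico (sig i) (tau i)).filter fun j' => j0 ≤ j' ∧ f (i, j') = k + 2).card
        = cnt sig tau f i (k + 1) := by
      rw [cnt]
      congr 1
      apply Finset.filter_congr
      intro j' hj'
      constructor
      · rintro ⟨_, h⟩; exact h
      · intro h
        have : j' ∈ (Finset.Ico (sig i) (tau i)).filter (fun j => f (i, j) = k + 2) :=
          Finset.mem_filter.mpr ⟨hj', h⟩
        rw [hfe2, Finset.mem_Ico] at this
        exact ⟨this.1, h⟩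
    have hT2 : ((Finset.Ico (sig i) (tau i)).filter fun j' => j0 ≤ j' ∧ f (i, j') = k + 1).card
        = 0 := by
      rw [Finset.card_eq_zero, Finset.filter_eq_empty_iff]
      rintro j' hj' ⟨h1, h2⟩
      rcases Nat.eq_zero_or_pos k with hk0 | hk0
      · subst hk0
        have hmem : j' ∈ (Finset.Ico (sig i) (tau i)).filter (fun j => f (i, j) = 0 + 1) :=
          Finset.mem_filter.mpr ⟨hj', h2⟩
        rw [filter_eq_eq hmr (hst i hi) 0, Finset.mem_Ico] at hmem
        omega
      · obtain ⟨k', rfl⟩ : ∃ k', k = k' + 1 := ⟨k - 1, by omega⟩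
        have hmem : j' ∈ (Finset.Ico (sig i) (tau i)).filter (fun j => f (i, j) = k' + 1 + 1) :=
          Finset.mem_filter.mpr ⟨hj', h2⟩
        rw [filter_eq_eq hmr (hst i hi) (k' + 1), Finset.mem_Ico] at hmem
        have hAm : Acnt sig tau f i (k' + 1 + 1) ≤ Acnt sig tau f i (k' + 1 + 1 + 1) := by
          rw [Acnt_succ]; omega
        omega
    rw [hT1, hT2] at hlatc
    rw [Finset.sum_range_succ]
    have e1 : (∑ i' ∈ Finset.range i,
        ((Finset.Ico (sig i') (tau i')).filter fun j' => f (i', j') = k + 2).card) =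
        ∑ t ∈ Finset.range i, cnt sig tau f t (k + 1) := rfl
    have e2 : (∑ i' ∈ Finset.range i,
        ((Finset.Ico (sig i') (tau i')).filter fun j' => f (i', j') = k + 1).card) =
        ∑ t ∈ Finset.range i, cnt sig tau f t k := rfl
    rw [e1, e2] at hlatc
    omega
  intro i
  induction i with
  | zero =>
    intro h0r k
    rcases Nat.eq_zero_or_pos (cnt sig tau f 0 (k + 1)) with h | h
    · simp [Finset.sum_range_one, h]
    · exact step 0 h0r k (by omega)
  | succ i ih =>
    intro hi k
    rcases Nat.eq_zero_or_pos (cnt sig tau f (i + 1) (k + 1)) with h | h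
    · rw [Finset.sum_range_succ, h, Nat.add_zero]
      calc ∑ t ∈ Finset.range (i + 1), cnt sig tau f t (k + 1) ≤
          ∑ t ∈ Finset.range i, cnt sig tau f t k := ih (by omega) k
        _ ≤ ∑ t ∈ Finset.range (i + 1), cnt sig tau f t k := by
            rw [Finset.sum_range_succ]; omega
    · exact step (i + 1) hi k (by omega)

end Lattice


def Qmat (r : ℕ) (lam mu : ℕ → ℕ) (m : ℕ → ℕ → ℕ) : Prop :=
  (∀ x y, r ≤ x ∨ r ≤ y → m x y = 0) ∧
  (∀ k, k < r → psum m k r = lam k) ∧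
  (∀ y, y < r → ∑ x ∈ Finset.range r, m x y = mu y) ∧
  (∀ x y, psum m (x + 1) (y + 1) ≤ psum m x y)

lemma ssyt_unpack {r : ℕ} {sig tau : ℕ → ℕ} {f : ℕ × ℕ → ℕ}
    (h0 : ∀ i, i < r → tau i ≤ tau 0) (h : IsSkewSSYT r sig tau f) :
    (∀ i j, ¬(i < r ∧ sig i ≤ j ∧ j < tau i) → f (i, j) = 0) ∧
    (∀ i j, i < r → sig i ≤ j → j < tau i → 1 ≤ f (i, j)) ∧
    (∀ i j j', i < r → sig i ≤ j → j ≤ j' → j' < tau i → f (i, j) ≤ f (i, j')) := by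
  obtain ⟨h1, h2, h3, _⟩ := h
  refine ⟨fun i j hn => h1 (i, j) (fun hc => hn ((mem_shapeCells h0).mp hc)),
    fun i j hi ha hb => h2 (i, j) ((mem_shapeCells h0).mpr ⟨hi, ha, hb⟩),
    fun i j j' hi ha hab hb => h3 i j j'
      ((mem_shapeCells h0).mpr ⟨hi, ha, lt_of_le_of_lt hab hb⟩)
      ((mem_shapeCells h0).mpr ⟨hi, le_trans ha hab, hb⟩) hab⟩

theorem left_card (r : ℕ) (hr : 1 ≤ r) (lam mu : ℕ → ℕ)
    (hlam : IsPartitionWith r lam) (hmu : IsPartitionWith r mu) :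
    Nat.card {f : ℕ × ℕ → ℕ //
        IsSkewSSYT r (fun _ => 0) lam f ∧
        (∀ c ∈ shapeCells r (fun _ => 0) lam, f c ≤ r) ∧
        HasContent r (fun _ => 0) lam f mu} =
      Nat.card {m : ℕ → ℕ → ℕ // Qmat r lam mu m} := by
  classical
  have h01 : ∀ i, i < r → lam i ≤ lam 0 := fun i _ => hlam.1 0 i (Nat.zero_le i)
  refine Nat.card_congr ⟨fun fp => ⟨cnt (fun _ => 0) lam fp.1, ?_⟩,
    fun mp => ⟨fill r (fun _ => 0) lam mp.1, ?_, ?_, ?_⟩, fun fp => ?_, fun mp => ?_⟩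
  · -- toFun proof : Qmat
    obtain ⟨f, hS, hle, hcont⟩ := fp
    dsimp only
    obtain ⟨hz, hpos, hmono⟩ := ssyt_unpack h01 hS
    have hcol := hS.2.2.2
    have hler : ∀ i j, i < r → (fun _ => (0:ℕ)) i ≤ j → j < lam i → f (i, j) ≤ r :=
      fun i j hi ha hb => hle (i, j) ((mem_shapeCells h01).mpr ⟨hi, ha, hb⟩)
    refine ⟨?_, ?_, ?_, ?_⟩
    · intro x y hxy
      rcases hxy with hx | hy
      · rw [cnt]
        have hl : lam x = 0 := hlam.2 x hx
        rw [hl]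
        simp
      · rw [cnt, Finset.card_eq_zero, Finset.filter_eq_empty_iff]
        intro j hj
        rw [Finset.mem_Ico] at hj
        by_cases hx : x < r
        · have := hler x j hx hj.1 hj.2
          omega
        · push_neg at hx
          have : lam x = 0 := hlam.2 x (by omega)
          omega
    · intro k hk
      rw [← Acnt_eq_psum (fun j a b => hpos k j hk a b),
        Acnt_top (fun j a b => hler k j hk a b)]
      omega
    · intro y hy
      exact (hasContent_iff h01 f mu).mp hcont y
    · intro x y
      by_cases hx : x + 1 < r
      · rw [← Acnt_eq_psum (fun j a b => hpos (x + 1) j hx a b),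
          ← Acnt_eq_psum (fun j a b => hpos x j (by omega) a b)]
        apply Finset.card_le_card
        intro j hj
        rw [Finset.mem_filter, Finset.mem_Ico] at hj ⊢
        obtain ⟨⟨hj1, hj2⟩, hj3⟩ := hj
        have hlt : j < lam x := lt_of_lt_of_le hj2 (hlam.1 x (x + 1) (by omega))
        have hstrict := hcol x (x + 1) j
          ((mem_shapeCells h01).mpr ⟨by omega, hj1, hlt⟩)
          ((mem_shapeCells h01).mpr ⟨hx, hj1, hj2⟩) (by omega)
        exact ⟨⟨hj1, hlt⟩, by omega⟩
      · have hzr : ∀ t, cnt (fun _ => (0:ℕ)) lam f (x + 1) t = 0 := by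
          intro t
          rw [cnt, Finset.card_eq_zero, Finset.filter_eq_empty_iff]
          intro j hj
          rw [Finset.mem_Ico] at hj
          have : lam (x + 1) = 0 := hlam.2 (x + 1) (by omega)
          omega
        have : psum (cnt (fun _ => (0:ℕ)) lam f) (x + 1) (y + 1) = 0 :=
          Finset.sum_eq_zero fun t _ => hzr t
        omega
  · -- invFun : IsSkewSSYT
    obtain ⟨m, hQ0, hQ1, hQ2, hQ3⟩ := mp
    dsimp only
    have hlen : ∀ i, i < r → (fun _ => (0:ℕ)) i + psum m i r = lam i := by
      intro i hi; simpa using hQ1 i hi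
    have hcons : ∀ x j, x + 1 < r → j < lam (x + 1) →
        fill r (fun _ => 0) lam m (x, j) < fill r (fun _ => 0) lam m (x + 1, j) := by
      intro x j hx hj
      have hjx : j < lam x := lt_of_lt_of_le hj (hlam.1 x (x + 1) (by omega))
      obtain ⟨v, hv⟩ : ∃ v, fill r (fun _ => 0) lam m (x + 1, j) = v + 1 := by
        have := fill_pos (r := r) (sig := fun _ => 0) (tau := lam) (m := m)
          (i := x + 1) (j := j) ⟨hx, Nat.zero_le j, hj⟩
        exact ⟨fill r (fun _ => 0) lam m (x + 1, j) - 1, by omega⟩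
      obtain ⟨w, hw⟩ : ∃ w, fill r (fun _ => 0) lam m (x, j) = w + 1 := by
        have := fill_pos (r := r) (sig := fun _ => 0) (tau := lam) (m := m)
          (i := x) (j := j) ⟨by omega, Nat.zero_le j, hjx⟩
        exact ⟨fill r (fun _ => 0) lam m (x, j) - 1, by omega⟩
      have hbv := (fill_eq_iff hx (Nat.zero_le j) hj (hlen (x + 1) hx) v).mp hv
      have hbw := (fill_eq_iff (show x < r by omega) (Nat.zero_le j) hjx
        (hlen x (by omega)) w).mp hw
      simp only [zero_add] at hbv hbw
      have h3 := hQ3 x v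
      have hwv : w < v := by
        by_contra hc
        push_neg at hc
        have := psum_mono m x (show v ≤ w from hc)
        omega
      omega
    refine ⟨?_, ?_, ?_, ?_⟩
    · rintro ⟨i, j⟩ hc
      rw [mem_shapeCells h01] at hc
      exact fill_zero hc
    · rintro ⟨i, j⟩ hc
      rw [mem_shapeCells h01] at hc
      exact fill_pos hc
    · intro i j j' hc hc' hjj
      rw [mem_shapeCells h01] at hc hc'
      exact fill_row_mono hc.1 hc.2.1 hjj hc'.2.2
    · intro i i' j hc hc' hii
      rw [mem_shapeCells h01] at hc hc'
      have key : ∀ d x, x + d + 1 < r → j < lam (x + d + 1) →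
          fill r (fun _ => 0) lam m (x, j) < fill r (fun _ => 0) lam m (x + d + 1, j) := by
        intro d
        induction d with
        | zero => intro x hx hj; exact hcons x j hx hj
        | succ d ih =>
          intro x hx hj
          have hj' : j < lam (x + d + 1) :=
            lt_of_lt_of_le hj (hlam.1 (x + d + 1) (x + d + 1 + 1) (by omega))
          calc fill r (fun _ => 0) lam m (x, j) <
              fill r (fun _ => 0) lam m (x + d + 1, j) := ih x (by omega) hj'
            _ < fill r (fun _ => 0) lam m (x + d + 1 + 1, j) :=
              hcons (x + d + 1) j (by omega) (by
                have : x + d + 1 + 1 = x + (d + 1) + 1 := by omega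
                rw [this]; exact hj)
            _ = fill r (fun _ => 0) lam m (x + (d + 1) + 1, j) := rfl
      have hd := key (i' - i - 1) i (by omega) (by
        have : i + (i' - i - 1) + 1 = i' := by omega
        rw [this]; exact hc'.2.2)
      have : i + (i' - i - 1) + 1 = i' := by omega
      rwa [this] at hd
  · -- invFun : entries ≤ r
    obtain ⟨m, hQ0, hQ1, hQ2, hQ3⟩ := mp
    dsimp only
    have hlen : ∀ i, i < r → (fun _ => (0:ℕ)) i + psum m i r = lam i := by
      intro i hi; simpa using hQ1 i hi
    intro c _
    exact fill_le_r hlen c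
  · -- invFun : content mu
    obtain ⟨m, hQ0, hQ1, hQ2, hQ3⟩ := mp
    dsimp only
    have hlen : ∀ i, i < r → (fun _ => (0:ℕ)) i + psum m i r = lam i := by
      intro i hi; simpa using hQ1 i hi
    rw [hasContent_iff h01]
    intro k
    by_cases hk : k < r
    · have heach : ∀ x, x < r →
          cnt (fun _ => 0) lam (fill r (fun _ => 0) lam m) x k = m x k :=
        fun x hx => cnt_fill hx hk (hlen x hx)
      rw [Finset.sum_congr rfl (fun x hx => heach x (Finset.mem_range.mp hx))]
      exact hQ2 k hk
    · have heach : ∀ x, cnt (fun _ => 0) lam (fill r (fun _ => 0) lam m) x k = 0 := by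
        intro x
        rw [cnt, Finset.card_eq_zero, Finset.filter_eq_empty_iff]
        intro j _
        have := fill_le_r (m := m) hlen (x, j)
        omega
      rw [Finset.sum_congr rfl (fun x _ => heach x)]
      simp [hmu.2 k (by omega)]
  · -- left_inv
    obtain ⟨f, hS, hle, hcont⟩ := fp
    obtain ⟨hz, hpos, hmono⟩ := ssyt_unpack h01 hS
    apply Subtype.ext
    dsimp only
    exact fill_cnt (fun i _ => Nat.zero_le _) hmono hpos
      (fun i j hi ha hb => hle (i, j) ((mem_shapeCells h01).mpr ⟨hi, ha, hb⟩)) hz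
  · -- right_inv
    obtain ⟨m, hQ0, hQ1, hQ2, hQ3⟩ := mp
    dsimp only
    have hlen : ∀ i, i < r → (fun _ => (0:ℕ)) i + psum m i r = lam i := by
      intro i hi; simpa using hQ1 i hi
    apply Subtype.ext
    funext x y
    dsimp only
    by_cases hx : x < r
    · by_cases hy : y < r
      · exact cnt_fill hx hy (hlen x hx)
      · have h1 : cnt (fun _ => 0) lam (fill r (fun _ => 0) lam m) x y = 0 := by
          rw [cnt, Finset.card_eq_zero, Finset.filter_eq_empty_iff]
          intro j _
          have := fill_le_r (m := m) hlen (x, j)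
          omega
        rw [h1, hQ0 x y (Or.inr (by omega))]
    · have h1 : cnt (fun _ => 0) lam (fill r (fun _ => 0) lam m) x y = 0 := by
        rw [cnt, Finset.card_eq_zero, Finset.filter_eq_empty_iff]
        intro j hj
        rw [Finset.mem_Ico] at hj
        have : lam x = 0 := hlam.2 x (by omega)
        omega
      rw [h1, hQ0 x y (Or.inl (by omega))]

theorem right_card (r : ℕ) (hr : 1 ≤ r) (lam mu sig2 tau2 : ℕ → ℕ)
    (hlam : IsPartitionWith r lam) (hmu : IsPartitionWith r mu)
    (hsig : ∀ i, sig2 i = ∑ t ∈ Finset.Ico (i + 1) r, mu t)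
    (htau : ∀ i, tau2 i = ∑ t ∈ Finset.Ico i r, mu t) :
    Nat.card {f : ℕ × ℕ → ℕ //
        IsSkewSSYT r sig2 tau2 f ∧ HasContent r sig2 tau2 f lam ∧
        IsLatticeWord r sig2 tau2 f} =
      Nat.card {m : ℕ → ℕ → ℕ // Qmat r lam mu m} := by
  classical
  have h02 : ∀ i, i < r → tau2 i ≤ tau2 0 := by
    intro i _
    rw [htau, htau]
    exact Finset.sum_le_sum_of_subset (Finset.Ico_subset_Ico (Nat.zero_le i) le_rfl)
  have hst2 : ∀ i, i < r → sig2 i ≤ tau2 i := by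
    intro i _
    rw [htau, hsig]
    exact Finset.sum_le_sum_of_subset (Finset.Ico_subset_Ico (by omega) le_rfl)
  have hrow2 : ∀ i, i < r → sig2 i + mu i = tau2 i := by
    intro i hi
    rw [htau, hsig, Finset.sum_eq_sum_Ico_succ_bot hi mu]
    omega
  have htau0 : ∀ i, r ≤ i → tau2 i = 0 := by
    intro i hi
    rw [htau, Finset.Ico_eq_empty (by omega), Finset.sum_empty]
  have hdisj : ∀ i i', i < i' → tau2 i' ≤ sig2 i := by
    intro i i' hii
    rw [htau, hsig]
    exact Finset.sum_le_sum_of_subset (Finset.Ico_subset_Ico (by omega) le_rfl)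
  have hrowzero : ∀ (f : ℕ × ℕ → ℕ) x, r ≤ x → ∀ w, cnt sig2 tau2 f x w = 0 := by
    intro f x hx w
    rw [cnt, Finset.Ico_eq_empty (by rw [htau0 x hx]; omega), Finset.filter_empty,
      Finset.card_empty]
  refine Nat.card_congr ⟨fun fp => ⟨fun x y => cnt sig2 tau2 fp.1 y x, ?_⟩,
    fun mp => ⟨fill r sig2 tau2 (fun i k => mp.1 k i), ?_, ?_, ?_⟩,
    fun fp => ?_, fun mp => ?_⟩
  · -- Qmat
    obtain ⟨f, hS, hcont, hlat⟩ := fp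
    dsimp only
    obtain ⟨hz, hpos, hmono⟩ := ssyt_unpack h02 hS
    have hler2 : ∀ i j, i < r → sig2 i ≤ j → j < tau2 i → f (i, j) ≤ r := by
      intro i j hi ha hb
      by_contra hc
      push_neg at hc
      have hcell : (i, j) ∈ (shapeCells r sig2 tau2).filter
          (fun p => f p = (f (i, j) - 1) + 1) :=
        Finset.mem_filter.mpr ⟨(mem_shapeCells h02).mpr ⟨hi, ha, hb⟩, by omega⟩
      have hcard := hcont (f (i, j) - 1)
      rw [hlam.2 _ (by omega), Finset.card_eq_zero] at hcard
      rw [hcard] at hcell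
      exact absurd hcell (Finset.notMem_empty _)
    refine ⟨?_, ?_, ?_, ?_⟩
    · intro x y hxy
      show cnt sig2 tau2 f y x = 0
      by_cases hy : y < r
      · have hx : r ≤ x := by
          rcases hxy with h | h
          · exact h
          · omega
        rw [cnt, Finset.card_eq_zero, Finset.filter_eq_empty_iff]
        intro j hj
        rw [Finset.mem_Ico] at hj
        have := hler2 y j hy hj.1 hj.2
        omega
      · exact hrowzero f y (by omega) x
    · intro k hk
      exact (hasContent_iff h02 f lam).mp hcont k
    · intro y hy
      show ∑ x ∈ Finset.range r, cnt sig2 tau2 f y x = mu y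
      have e : ∑ x ∈ Finset.range r, cnt sig2 tau2 f y x =
          psum (cnt sig2 tau2 f) y r := rfl
      rw [e, ← Acnt_eq_psum (fun j a b => hpos y j hy a b),
        Acnt_top (fun j a b => hler2 y j hy a b)]
      have := hrow2 y hy
      have := hst2 y hy
      omega
    · intro x y
      have H := cnt_of_lattice hmono hpos h02 hst2 hlat
      show ∑ t ∈ Finset.range (y + 1), cnt sig2 tau2 f t (x + 1) ≤
        ∑ t ∈ Finset.range y, cnt sig2 tau2 f t x
      by_cases hy : y < r
      · exact H y hy x
      · calc ∑ t ∈ Finset.range (y + 1), cnt sig2 tau2 f t (x + 1) =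
            ∑ t ∈ Finset.range r, cnt sig2 tau2 f t (x + 1) := by
              refine (Finset.sum_subset (Finset.range_subset_range.mpr (by omega)) ?_).symm
              intro t ht hnt
              rw [Finset.mem_range] at hnt
              exact hrowzero f t (by omega) (x + 1)
          _ = ∑ t ∈ Finset.range (r - 1 + 1), cnt sig2 tau2 f t (x + 1) := by
              rw [show r - 1 + 1 = r by omega]
          _ ≤ ∑ t ∈ Finset.range (r - 1), cnt sig2 tau2 f t x := H (r - 1) (by omega) x
          _ ≤ ∑ t ∈ Finset.range y, cnt sig2 tau2 f t x :=
              Finset.sum_le_sum_of_subset (Finset.range_subset_range.mpr (by omega))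
  · -- IsSkewSSYT for fill
    obtain ⟨m, hQ0, hQ1, hQ2, hQ3⟩ := mp
    dsimp only
    have hlen2 : ∀ i, i < r → sig2 i + psum (fun i k => m k i) i r = tau2 i := by
      intro i hi
      have e : psum (fun i k => m k i) i r = ∑ t ∈ Finset.range r, m t i := rfl
      rw [e, hQ2 i hi]
      exact hrow2 i hi
    refine ⟨?_, ?_, ?_, ?_⟩
    · rintro ⟨i, j⟩ hc
      rw [mem_shapeCells h02] at hc
      exact fill_zero hc
    · rintro ⟨i, j⟩ hc
      rw [mem_shapeCells h02] at hc
      exact fill_pos hc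
    · intro i j j' hc hc' hjj
      rw [mem_shapeCells h02] at hc hc'
      exact fill_row_mono hc.1 hc.2.1 hjj hc'.2.2
    · intro i i' j hc hc' hii
      rw [mem_shapeCells h02] at hc hc'
      exfalso
      have := hdisj i i' hii
      have h1 := hc.2.1
      have h2 := hc'.2.2
      omega
  · -- content lam
    obtain ⟨m, hQ0, hQ1, hQ2, hQ3⟩ := mp
    dsimp only
    have hlen2 : ∀ i, i < r → sig2 i + psum (fun i k => m k i) i r = tau2 i := by
      intro i hi
      have e : psum (fun i k => m k i) i r = ∑ t ∈ Finset.range r, m t i := rfl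
      rw [e, hQ2 i hi]
      exact hrow2 i hi
    rw [hasContent_iff h02]
    intro k
    by_cases hk : k < r
    · have heach : ∀ x, x < r →
          cnt sig2 tau2 (fill r sig2 tau2 (fun i k => m k i)) x k = m k x :=
        fun x hx => cnt_fill hx hk (hlen2 x hx)
      rw [Finset.sum_congr rfl (fun x hx => heach x (Finset.mem_range.mp hx))]
      exact hQ1 k hk
    · have heach : ∀ x, cnt sig2 tau2 (fill r sig2 tau2 (fun i k => m k i)) x k = 0 := by
        intro x
        rw [cnt, Finset.card_eq_zero, Finset.filter_eq_empty_iff]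
        intro j _
        have := fill_le_r (m := fun i k => m k i) hlen2 (x, j)
        omega
      rw [Finset.sum_congr rfl (fun x _ => heach x)]
      simp [hlam.2 k (by omega)]
  · -- lattice
    obtain ⟨m, hQ0, hQ1, hQ2, hQ3⟩ := mp
    dsimp only
    have hlen2 : ∀ i, i < r → sig2 i + psum (fun i k => m k i) i r = tau2 i := by
      intro i hi
      have e : psum (fun i k => m k i) i r = ∑ t ∈ Finset.range r, m t i := rfl
      rw [e, hQ2 i hi]
      exact hrow2 i hi
    have hmonoF : ∀ i j j', i < r → sig2 i ≤ j → j ≤ j' → j' < tau2 i →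
        fill r sig2 tau2 (fun i k => m k i) (i, j) ≤
          fill r sig2 tau2 (fun i k => m k i) (i, j') :=
      fun i j j' hi ha hab hb => fill_row_mono hi ha hab hb
    have hposF : ∀ i j, i < r → sig2 i ≤ j → j < tau2 i →
        1 ≤ fill r sig2 tau2 (fun i k => m k i) (i, j) :=
      fun i j hi ha hb => fill_pos ⟨hi, ha, hb⟩
    apply lattice_of_cnt hmonoF hposF h02
    intro i hi k
    by_cases hk : k + 1 < r
    · have e1 : ∀ t ∈ Finset.range (i + 1),
          cnt sig2 tau2 (fill r sig2 tau2 (fun i k => m k i)) t (k + 1) = m (k + 1) t := by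
        intro t ht
        rw [Finset.mem_range] at ht
        exact cnt_fill (by omega) hk (hlen2 t (by omega))
      have e2 : ∀ t ∈ Finset.range i,
          cnt sig2 tau2 (fill r sig2 tau2 (fun i k => m k i)) t k = m k t := by
        intro t ht
        rw [Finset.mem_range] at ht
        exact cnt_fill (by omega) (by omega) (hlen2 t (by omega))
      rw [Finset.sum_congr rfl e1, Finset.sum_congr rfl e2]
      exact hQ3 k i
    · have e1 : ∀ t ∈ Finset.range (i + 1),
          cnt sig2 tau2 (fill r sig2 tau2 (fun i k => m k i)) t (k + 1) = 0 := by
        intro t _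
        rw [cnt, Finset.card_eq_zero, Finset.filter_eq_empty_iff]
        intro j _
        have := fill_le_r (m := fun i k => m k i) hlen2 (t, j)
        omega
      rw [Finset.sum_congr rfl e1]
      simp
  · -- left_inv
    obtain ⟨f, hS, hcont, hlat⟩ := fp
    obtain ⟨hz, hpos, hmono⟩ := ssyt_unpack h02 hS
    have hler2 : ∀ i j, i < r → sig2 i ≤ j → j < tau2 i → f (i, j) ≤ r := by
      intro i j hi ha hb
      by_contra hc
      push_neg at hc
      have hcell : (i, j) ∈ (shapeCells r sig2 tau2).filter
          (fun p => f p = (f (i, j) - 1) + 1) :=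
        Finset.mem_filter.mpr ⟨(mem_shapeCells h02).mpr ⟨hi, ha, hb⟩, by omega⟩
      have hcard := hcont (f (i, j) - 1)
      rw [hlam.2 _ (by omega), Finset.card_eq_zero] at hcard
      rw [hcard] at hcell
      exact absurd hcell (Finset.notMem_empty _)
    apply Subtype.ext
    dsimp only
    exact fill_cnt hst2 hmono hpos hler2 hz
  · -- right_inv
    obtain ⟨m, hQ0, hQ1, hQ2, hQ3⟩ := mp
    have hlen2 : ∀ i, i < r → sig2 i + psum (fun i k => m k i) i r = tau2 i := by
      intro i hi
      have e : psum (fun i k => m k i) i r = ∑ t ∈ Finset.range r, m t i := rfl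
      rw [e, hQ2 i hi]
      exact hrow2 i hi
    apply Subtype.ext
    funext x y
    dsimp only
    by_cases hy : y < r
    · by_cases hx : x < r
      · exact cnt_fill hy hx (hlen2 y hy)
      · have h1 : cnt sig2 tau2 (fill r sig2 tau2 (fun i k => m k i)) y x = 0 := by
          rw [cnt, Finset.card_eq_zero, Finset.filter_eq_empty_iff]
          intro j _
          have := fill_le_r (m := fun i k => m k i) hlen2 (y, j)
          omega
        rw [h1, hQ0 x y (Or.inl (by omega))]
    · have h1 : cnt sig2 tau2 (fill r sig2 tau2 (fun i k => m k i)) y x = 0 := by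
        rw [cnt, Finset.Ico_eq_empty (by rw [htau0 y (by omega)]; omega),
          Finset.filter_empty, Finset.card_empty]
      rw [h1]
      rcases Nat.lt_or_ge x r with hx | hx
      · rw [hQ0 x y (Or.inr (by omega))]
      · rw [hQ0 x y (Or.inl (by omega))]

end Stmt11

/-- for partitions `λ, μ` with `r` parts, taking `τ_i = μ_i + ⋯ + μ_r` and
`σ_i = μ_{i+1} + ⋯ + μ_r`, the number of semistandard Young tableaux of shape `λ` and
content `μ` with entries in `{1, …, r}` (the Kostka number `K_{λμ}`) equals the number of
Littlewood–Richardson skew tableaux of shape `τ/σ` and content `λ` (the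
Littlewood–Richardson coefficient `c_{σλ}^{τ}`). -/
theorem stmt11 (r : ℕ) (hr : 1 ≤ r) (lam mu : ℕ → ℕ)
    (hlam : IsPartitionWith r lam) (hmu : IsPartitionWith r mu) :
    Nat.card {f : ℕ × ℕ → ℕ //
        IsSkewSSYT r (fun _ => 0) lam f ∧
        (∀ c ∈ shapeCells r (fun _ => 0) lam, f c ≤ r) ∧
        HasContent r (fun _ => 0) lam f mu} =
      Nat.card {f : ℕ × ℕ → ℕ //
        IsSkewSSYT r (fun i => ∑ t ∈ Finset.Ico (i + 1) r, mu t)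
          (fun i => ∑ t ∈ Finset.Ico i r, mu t) f ∧
        HasContent r (fun i => ∑ t ∈ Finset.Ico (i + 1) r, mu t)
          (fun i => ∑ t ∈ Finset.Ico i r, mu t) f lam ∧
        IsLatticeWord r (fun i => ∑ t ∈ Finset.Ico (i + 1) r, mu t)
          (fun i => ∑ t ∈ Finset.Ico i r, mu t) f} :=
  (Stmt11.left_card r hr lam mu hlam hmu).trans
    (Stmt11.right_card r hr lam mu
      (fun i => ∑ t ∈ Finset.Ico (i + 1) r, mu t)
      (fun i => ∑ t ∈ Finset.Ico i r, mu t) hlam hmu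
      (fun _ => rfl) (fun _ => rfl)).symm
end
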